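/- Fesenko's map φ_{L/K}^{(φ)} : Gal(L/K) → U^◇_{X̃(L/K)}/U_{X(L/K)} satisfies the cocycle identity φ_{L/K}^{(φ)}(στ) = φ_{L/K}^{(φ)}(σ) · φ_{L/K}^{(φ)}(τ)^σ for all σ, τ ∈ Gal(L/K). -/
import Mathlib


/-- Fesenko's map `φ_{L/K}^{(φ)} : Gal(L/K) → U^◇_{X̃(L/K)}/U_{X(L/K)}`
satisfies the cocycle identity `φ(στ) = φ(σ)·φ(τ)^σ`.  Here `A` models the multiplicative
group `X̃(L/K)^×` with the `Gal(L/K)`-action, `frob` the Lubin–Tate/Frobenius action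
`φ` (commuting with the Galois action), `Prim = Π_{φ;L/K}` the canonical norm-compatible
sequence of primes, `N = U_{X(L/K)}` the subgroup modulo which solutions of
`U^{1-φ} = Π^{σ-1}` are unique, and `U σ = U_σ` a chosen solution for each `σ`.  The
conclusion states `φ(στ) ≡ φ(σ)·φ(τ)^σ mod U_{X(L/K)}`. -/
theorem fesenko_cocycle {G A : Type*} [Group G] [CommGroup A] [MulDistribMulAction G A]
    (frob : A →* A) (hfrob : ∀ (σ : G) (a : A), frob (σ • a) = σ • frob a)
    (Prim : A) (N : Subgroup A)
    (U : G → A)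
    (hU : ∀ σ : G, U σ * (frob (U σ))⁻¹ = σ • Prim * Prim⁻¹)
    (huniq : ∀ a b : A, a * (frob a)⁻¹ = b * (frob b)⁻¹ → a⁻¹ * b ∈ N) :
    ∀ σ τ : G, (U (σ * τ))⁻¹ * (U σ * σ • U τ) ∈ N := by
  intro σ τ
  apply huniq
  rw [hU]
  have hsi : ∀ a : A, σ • a⁻¹ = (σ • a)⁻¹ := fun a => by
    rw [eq_inv_iff_mul_eq_one, ← smul_mul', inv_mul_cancel, smul_one]
  calc (σ * τ) • Prim * Prim⁻¹
      = σ • (τ • Prim * Prim⁻¹) * (σ • Prim * Prim⁻¹) := by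
        rw [smul_mul', hsi, mul_smul]
        simp [mul_assoc, mul_comm, mul_left_comm]
    _ = σ • (U τ * (frob (U τ))⁻¹) * (U σ * (frob (U σ))⁻¹) := by rw [hU, hU]
    _ = U σ * σ • U τ * (frob (U σ * σ • U τ))⁻¹ := by
        rw [map_mul, hfrob, smul_mul', hsi, mul_inv]
        simp [mul_assoc, mul_comm, mul_left_comm]
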